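/- Let K be a number field with ring of integers 𝒪_K, let P_1 and P_2 be distinct prime ideals of 𝒪_K, let α, β be positive integers and ε a natural number with (β − α)/2 ≥ ε, and set I = P_1^{α}·P_2^{β} and J = P_1^{α+ε}·P_2^{β−ε}. Then 0 ≤ H(J) − H(I) ≤ (α·log α + β·log β)/(α + β) − log((α + β)/2). -/

import Mathlib

open NumberField UniqueFactorizationMonoid

/-- `Ω(I)`: the number of prime ideal factors of `I`, counted with multiplicity. -/
noncomputable def idealBigOmega {K : Type*} [Field K] [NumberField K]
    (I : Ideal (𝓞 K)) : ℕ :=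
  Multiset.card (normalizedFactors I)

open scoped Classical in
/-- `ω(I)`: the number of distinct prime ideal factors of `I`. -/
noncomputable def idealSmallOmega {K : Type*} [Field K] [NumberField K]
    (I : Ideal (𝓞 K)) : ℕ :=
  (normalizedFactors I).toFinset.card

open scoped Classical in
/-- The entropy of an ideal `I = P_1^{e_1} ⋯ P_g^{e_g}` of the ring of integers:
`H(I) = log Ω(I) − (1/Ω(I)) ∑_i e_i log e_i`. -/
noncomputable def idealEntropy {K : Type*} [Field K] [NumberField K]
    (I : Ideal (𝓞 K)) : ℝ :=
  Real.log (idealBigOmega I : ℝ) -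
    (1 / (idealBigOmega I : ℝ)) *
      ∑ P ∈ (normalizedFactors I).toFinset,
        ((normalizedFactors I).count P : ℝ) * Real.log ((normalizedFactors I).count P)


lemma majorize_mul_log {a b c d : ℝ} (ha : 0 ≤ a) (hac : a ≤ c) (hcd : c ≤ d)
    (hdb : d ≤ b) (hsum : a + b = c + d) :
    c * Real.log c + d * Real.log d ≤ a * Real.log a + b * Real.log b := by
  rcases eq_or_lt_of_le (hac.trans (hcd.trans hdb)) with h | hab
  · have h1 : a = c := le_antisymm hac (by nlinarith)
    have h2 : b = d := by linarith
    rw [h1, h2]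
  set f : ℝ → ℝ := fun x => x * Real.log x with hf
  set t : ℝ := (b - c) / (b - a) with ht
  have hba : 0 < b - a := by linarith
  have ht0 : 0 ≤ t := div_nonneg (by linarith) hba.le
  have ht1 : t ≤ 1 := (div_le_one hba).mpr (by linarith)
  have hc : t * a + (1 - t) * b = c := by
    field_simp [ht]; have h' : t * (b - a) = b - c := div_mul_cancel₀ (b - c) hba.ne'; linarith
  have hd : (1 - t) * a + t * b = d := by
    field_simp [ht]; nlinarith [hsum]
  have hcv := Real.convexOn_mul_log.2 (Set.mem_Ici.mpr ha)
    (Set.mem_Ici.mpr (by linarith : (0:ℝ) ≤ b))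
  have h1 : f (t • a + (1 - t) • b) ≤ t • f a + (1 - t) • f b :=
    hcv ht0 (by linarith) (by ring)
  have h2 : f ((1 - t) • a + t • b) ≤ (1 - t) • f a + t • f b :=
    hcv (by linarith) ht0 (by ring)
  simp only [smul_eq_mul, hf] at h1 h2
  rw [hc] at h1
  rw [hd] at h2
  nlinarith [h1, h2]

lemma jensen_mul_log {c d : ℝ} (hc : 0 ≤ c) (hd : 0 ≤ d) :
    2 * (((c + d) / 2) * Real.log ((c + d) / 2)) ≤
      c * Real.log c + d * Real.log d := by
  have hcv := Real.convexOn_mul_log.2 (Set.mem_Ici.mpr hc) (Set.mem_Ici.mpr hd)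
  have h1 : ((1:ℝ)/2) • c + ((1:ℝ)/2) • d = (c + d) / 2 := by rw [smul_eq_mul, smul_eq_mul]; ring
  have := hcv (by norm_num : (0:ℝ) ≤ 1/2) (by norm_num : (0:ℝ) ≤ 1/2) (by norm_num)
  rw [h1] at this
  simp only [smul_eq_mul] at this
  linarith

open scoped Classical in
lemma idealEntropy_two_primes {K : Type*} [Field K] [NumberField K]
    (P₁ P₂ : Ideal (𝓞 K)) (hP₁ : Prime P₁) (hP₂ : Prime P₂) (hne : P₁ ≠ P₂)
    (a b : ℕ) (ha : 0 < a) (hb : 0 < b) :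
    idealEntropy (P₁ ^ a * P₂ ^ b) =
      Real.log ((a : ℝ) + b) -
        (1 / ((a : ℝ) + b)) * ((a : ℝ) * Real.log a + (b : ℝ) * Real.log b) := by
  have key : normalizedFactors (P₁ ^ a * P₂ ^ b) =
      Multiset.replicate a P₁ + Multiset.replicate b P₂ := by
    rw [normalizedFactors_mul (pow_ne_zero _ hP₁.ne_zero) (pow_ne_zero _ hP₂.ne_zero),
      normalizedFactors_of_irreducible_pow hP₁.irreducible,
      normalizedFactors_of_irreducible_pow hP₂.irreducible,
      normalize_eq, normalize_eq]
  have hcard : idealBigOmega (P₁ ^ a * P₂ ^ b) = a + b := by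
    rw [idealBigOmega, key]; simp
  have htf : (normalizedFactors (P₁ ^ a * P₂ ^ b)).toFinset = {P₁, P₂} := by
    rw [key, Multiset.toFinset_add, Multiset.toFinset_replicate, Multiset.toFinset_replicate,
      if_neg ha.ne', if_neg hb.ne']
    rfl
  have hc1 : (normalizedFactors (P₁ ^ a * P₂ ^ b)).count P₁ = a := by
    rw [key]; simp [Multiset.count_replicate, hne.symm]
  have hc2 : (normalizedFactors (P₁ ^ a * P₂ ^ b)).count P₂ = b := by
    rw [key]; simp [Multiset.count_replicate, hne]
  rw [idealEntropy, hcard, htf, Finset.sum_insert (by simp [hne]), Finset.sum_singleton,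
    hc1, hc2]
  push_cast
  ring

set_option maxHeartbeats 1000000 in
theorem idealEntropy_diff_nonneg_and_le {K : Type*} [Field K] [NumberField K]
    (P₁ P₂ : Ideal (𝓞 K)) (hP₁ : Prime P₁) (hP₂ : Prime P₂) (hne : P₁ ≠ P₂)
    (α β ε : ℕ) (hα : 0 < α) (hβ : 0 < β)
    (hε : (ε : ℝ) ≤ ((β : ℝ) - (α : ℝ)) / 2)
    (I J : Ideal (𝓞 K)) (hI : I = P₁ ^ α * P₂ ^ β)
    (hJ : J = P₁ ^ (α + ε) * P₂ ^ (β - ε)) :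
    0 ≤ idealEntropy J - idealEntropy I ∧
      idealEntropy J - idealEntropy I ≤
        ((α : ℝ) * Real.log α + (β : ℝ) * Real.log β) / ((α : ℝ) + β) -
          Real.log (((α : ℝ) + β) / 2) := by
  have h1 : (1:ℝ) ≤ (α:ℝ) := by exact_mod_cast hα
  have hε0 : (0:ℝ) ≤ (ε:ℝ) := Nat.cast_nonneg ε
  have hεβR : (ε:ℝ) ≤ (β:ℝ) := by linarith
  have hεβ : ε ≤ β := by exact_mod_cast hεβR
  have hβε : 0 < β - ε := by
    have : (ε:ℝ) < (β:ℝ) := by linarith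
    have : ε < β := by exact_mod_cast this
    omega
  have hcast : ((β - ε : ℕ) : ℝ) = (β:ℝ) - (ε:ℝ) := by
    exact Nat.cast_sub hεβ
  have hI' := idealEntropy_two_primes P₁ P₂ hP₁ hP₂ hne α β hα hβ
  have hJ' := idealEntropy_two_primes P₁ P₂ hP₁ hP₂ hne (α + ε) (β - ε)
    (by omega) hβε
  rw [hcast] at hJ'
  push_cast at hJ'
  set A : ℝ := (α : ℝ) with hA
  set B : ℝ := (β : ℝ) with hB
  set E : ℝ := (ε : ℝ) with hE
  have hS : 0 < A + B := by linarith
  have hsum : A + E + (B - E) = A + B := by ring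
  rw [hsum] at hJ'
  rw [hI, hJ, hI', hJ']
  set Ci : ℝ := A * Real.log A + B * Real.log B with hCi
  set Cj : ℝ := (A + E) * Real.log (A + E) + (B - E) * Real.log (B - E) with hCj
  have hmaj : Cj ≤ Ci :=
    majorize_mul_log (by linarith) (by linarith) (by linarith) (by linarith) (by ring)
  have hjen : 2 * (((A + B) / 2) * Real.log ((A + B) / 2)) ≤ Cj := by
    have := jensen_mul_log (c := A + E) (d := B - E) (by linarith) (by linarith)
    rw [hsum] at this
    exact this
  have hinv : 0 < 1 / (A + B) := by positivity
  constructor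
  · have := mul_le_mul_of_nonneg_left hmaj hinv.le
    linarith
  · have h2 : Real.log ((A + B) / 2) * (A + B) ≤ Cj := by nlinarith [hjen]
    have h3 : Real.log ((A + B) / 2) ≤ (1 / (A + B)) * Cj := by
      rw [one_div, inv_mul_eq_div, le_div_iff₀ hS]
      exact h2
    have h4 : Ci / (A + B) = (1 / (A + B)) * Ci := by ring
    linarith
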